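/- Let ξ_1, ξ_2, … be i.i.d. real random variables with E[ξ_1] ∈ (−∞, 0), and assume E[e^{uξ_1}] < ∞ for some u > 0. Then there exists a constant C < ∞ such that for all t > 0, E[Σ_{n=0}^{ν(t)−1} e^{−S_n}] ≤ C e^t, where S_0 = 0, S_n = ξ_1 + ⋯ + ξ_n, and ν(t) = inf{n ≥ 1 : S_n ≤ −t}. -/

import Mathlib

open MeasureTheory ProbabilityTheory Filter
open scoped ENNReal


open MeasureTheory ProbabilityTheory Filter Finset
open scoped ENNReal

noncomputable section ExpDescentAux

open Classical in
/-- One term of the truncated functional: `1{S_m > -t ∀ 1≤m≤n} * exp(-(S_n + t))`. -/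
def wFun (n : ℕ) (t : ℝ) (y : ℕ → ℝ) : ℝ≥0∞ :=
  if ∀ m, 1 ≤ m → m ≤ n → -t < ∑ i ∈ Finset.range m, y i then
    ENNReal.ofReal (Real.exp (-(∑ i ∈ Finset.range n, y i) - t)) else 0

lemma wFun_congr {n : ℕ} {t : ℝ} {y y' : ℕ → ℝ} (h : ∀ i < n, y i = y' i) :
    wFun n t y = wFun n t y' := by
  have hsum : ∀ m ≤ n, ∑ i ∈ Finset.range m, y i = ∑ i ∈ Finset.range m, y' i := by
    intro m hm
    refine Finset.sum_congr rfl fun i hi => h i ?_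
    exact lt_of_lt_of_le (Finset.mem_range.mp hi) hm
  unfold wFun
  rw [hsum n le_rfl]
  congr 1
  simp only [eq_iff_iff]
  constructor <;> intro hc m h1 h2
  · rw [← hsum m h2]; exact hc m h1 h2
  · rw [hsum m h2]; exact hc m h1 h2

lemma wFun_zero (t : ℝ) (y : ℕ → ℝ) : wFun 0 t y = ENNReal.ofReal (Real.exp (-t)) := by
  unfold wFun
  rw [if_pos (by omega)]
  simp

lemma wFun_succ (n : ℕ) (t : ℝ) (y : ℕ → ℝ) :
    wFun (n + 1) t y =
      if -t < y 0 then wFun n (t + y 0) (fun i => y (i + 1)) else 0 := by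
  have hsum : ∀ m : ℕ, ∑ i ∈ Finset.range (m + 1), y i
      = (∑ i ∈ Finset.range m, y (i + 1)) + y 0 := fun m => Finset.sum_range_succ' y m
  have hcond : (∀ m, 1 ≤ m → m ≤ n + 1 → -t < ∑ i ∈ Finset.range m, y i)
      ↔ (-t < y 0 ∧ ∀ m, 1 ≤ m → m ≤ n →
          -(t + y 0) < ∑ i ∈ Finset.range m, y (i + 1)) := by
    constructor
    · intro hc
      refine ⟨by simpa using hc 1 le_rfl (by omega), fun m h1 h2 => ?_⟩
      have := hc (m + 1) (by omega) (by omega)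
      rw [hsum m] at this
      linarith
    · rintro ⟨h0, hc⟩ m h1 h2
      rcases Nat.exists_eq_add_of_le h1 with ⟨m', rfl⟩
      rcases Nat.eq_zero_or_pos m' with rfl | hm'
      · simpa using h0
      · have := hc m' hm' (by omega)
        rw [show 1 + m' = m' + 1 by omega, hsum m']
        linarith
  unfold wFun
  by_cases h0 : -t < y 0
  · rw [if_pos h0]
    by_cases hc : ∀ m, 1 ≤ m → m ≤ n → -(t + y 0) < ∑ i ∈ Finset.range m, y (i + 1)
    · rw [if_pos (hcond.mpr ⟨h0, hc⟩), if_pos hc, hsum n]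
      congr 2
      ring
    · rw [if_neg (fun h => hc (hcond.mp h).2), if_neg hc]
  · rw [if_neg h0, if_neg (fun h => h0 (hcond.mp h).1)]

lemma sum_wFun_rec (N : ℕ) (t : ℝ) (y : ℕ → ℝ) :
    ∑ n ∈ Finset.range (N + 1), wFun n t y =
      ENNReal.ofReal (Real.exp (-t)) +
        (if -t < y 0 then ∑ n ∈ Finset.range N, wFun n (t + y 0) (fun i => y (i + 1))
         else 0) := by
  rw [Finset.sum_range_succ' (fun n => wFun n t y) N, wFun_zero, add_comm]
  congr 1
  simp only [wFun_succ]
  split_ifs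
  · rfl
  · simp

/-- Measurability of `wFun` along measurable parameter maps. -/
lemma measurable_wFun {α : Type*} [MeasurableSpace α] (n : ℕ) {a : α → ℝ} {b : α → ℕ → ℝ}
    (ha : Measurable a) (hb : ∀ i, Measurable fun p => b p i) :
    Measurable fun p => wFun n (a p) (b p) := by
  unfold wFun
  have hS : ∀ m : ℕ, Measurable fun p => ∑ i ∈ Finset.range m, b p i := fun m =>
    Finset.measurable_sum _ fun i _ => hb i
  refine Measurable.ite ?_ ?_ measurable_const
  · have : {p | ∀ m, 1 ≤ m → m ≤ n → -a p < ∑ i ∈ Finset.range m, b p i} =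
        ⋂ m, ⋂ (_ : 1 ≤ m), ⋂ (_ : m ≤ n), {p | -a p < ∑ i ∈ Finset.range m, b p i} := by
      ext p; simp
    rw [this]
    exact MeasurableSet.iInter fun m => MeasurableSet.iInter fun _ =>
      MeasurableSet.iInter fun _ => measurableSet_lt ha.neg (hS m)
  · exact (Real.measurable_exp.comp ((hS n).neg.sub ha)).ennreal_ofReal

end ExpDescentAux


open MeasureTheory ProbabilityTheory Filter Finset
open scoped ENNReal

section Transfer

variable {Ω : Type*} [MeasurableSpace Ω] (μ : Measure Ω) [IsProbabilityMeasure μ]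
  (ξ : ℕ → Ω → ℝ) (hmeas : ∀ i, Measurable (ξ i))
  (hindep : iIndepFun ξ μ)
  (hident : ∀ i, IdentDistrib (ξ i) (ξ 0) μ μ)

omit [IsProbabilityMeasure μ] in
include hmeas in
lemma measurable_vec (k N : ℕ) : Measurable fun ω (i : Fin N) => ξ (k + i) ω :=
  measurable_pi_lambda _ fun i => hmeas _

include hmeas hindep in
lemma indep_head_tail (k N : ℕ) :
    IndepFun (ξ k) (fun ω (i : Fin N) => ξ (k + 1 + i) ω) μ := by
  classical
  set T : Finset ℕ := Finset.image (fun i : ℕ => k + 1 + i) (Finset.range N) with hT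
  have hST : Disjoint ({k} : Finset ℕ) T := by
    simp only [Finset.disjoint_left, Finset.mem_singleton, hT, Finset.mem_image,
      Finset.mem_range]
    rintro a rfl ⟨i, hi, h⟩
    omega
  have h := hindep.indepFun_finset {k} T hST hmeas
  let φ : (∀ _ : ({k} : Finset ℕ), ℝ) → ℝ := fun v => v ⟨k, Finset.mem_singleton_self k⟩
  let ψ : (∀ _ : T, ℝ) → (Fin N → ℝ) := fun v i =>
    v ⟨k + 1 + i, by
      simp only [hT, Finset.mem_image, Finset.mem_range]
      exact ⟨i, i.isLt, rfl⟩⟩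
  have hφ : Measurable φ := measurable_pi_apply _
  have hψ : Measurable ψ := measurable_pi_lambda _ fun i => measurable_pi_apply _
  exact h.comp hφ hψ

include hmeas hindep hident in
lemma map_vec_eq_pi : ∀ N k, μ.map (fun ω (i : Fin N) => ξ (k + i) ω)
    = Measure.pi (fun _ : Fin N => μ.map (ξ 0)) := by
  intro N
  induction N with
  | zero =>
    intro k
    have h1 : (fun ω (i : Fin 0) => ξ (k + i) ω) = fun _ => (isEmptyElim : ∀ _ : Fin 0, ℝ) := by
      funext ω i; exact i.elim0
    rw [h1, Measure.map_const, measure_univ, one_smul, Measure.pi_of_empty]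
  | succ N ih =>
    intro k
    set ν := μ.map (ξ 0) with hν
    have hνp : IsProbabilityMeasure ν := Measure.isProbabilityMeasure_map (hmeas 0).aemeasurable
    have hprod : μ.map (fun ω => (ξ k ω, fun i : Fin N => ξ (k + 1 + i) ω))
        = ν.prod (Measure.pi fun _ : Fin N => ν) := by
      rw [(indepFun_iff_map_prod_eq_prod_map_map (hmeas k).aemeasurable
          (measurable_vec ξ hmeas (k+1) N).aemeasurable).mp
          (indep_head_tail μ ξ hmeas hindep k N),
        (hident k).map_eq, ih (k + 1)]
    set e := MeasurableEquiv.piFinSuccAbove (fun _ : Fin (N + 1) => ℝ) 0 with he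
    have hme : MeasurePreserving e (Measure.pi fun _ : Fin (N + 1) => ν)
        (ν.prod (Measure.pi fun _ : Fin N => ν)) :=
      measurePreserving_piFinSuccAbove (fun _ : Fin (N + 1) => ν) 0
    have h2 : (⇑e) ∘ (fun ω (i : Fin (N + 1)) => ξ (k + i) ω)
        = fun ω => (ξ k ω, fun i : Fin N => ξ (k + 1 + i) ω) := by
      funext ω
      simp only [Function.comp_apply, he, MeasurableEquiv.piFinSuccAbove,
        MeasurableEquiv.coe_mk, Fin.insertNthEquiv, Equiv.coe_fn_symm_mk]
      refine Prod.ext (by simp) ?_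
      funext i
      simp [Fin.removeNth, Fin.succAbove_zero]
      congr 1
      omega
    have h3 : (μ.map (fun ω (i : Fin (N + 1)) => ξ (k + i) ω)).map e
        = ν.prod (Measure.pi fun _ : Fin N => ν) := by
      rw [Measure.map_map e.measurable (measurable_vec ξ hmeas k (N+1)), h2, hprod]
    have h4 : μ.map (fun ω (i : Fin (N + 1)) => ξ (k + i) ω)
        = ((μ.map (fun ω (i : Fin (N + 1)) => ξ (k + i) ω)).map e).map e.symm :=
      (MeasurableEquiv.map_symm_map e).symm
    rw [h4, h3, (hme.symm e).map_eq]

include hmeas hindep hident in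
lemma lintegral_vec (k N : ℕ) {Φ : (Fin N → ℝ) → ℝ≥0∞} (hΦ : Measurable Φ) :
    ∫⁻ ω, Φ (fun i : Fin N => ξ (k + i) ω) ∂μ
      = ∫⁻ y, Φ y ∂(Measure.pi fun _ : Fin N => μ.map (ξ 0)) := by
  rw [← map_vec_eq_pi μ ξ hmeas hindep hident N k,
    lintegral_map hΦ (measurable_vec ξ hmeas k N)]

include hmeas hindep hident in
lemma step_lemma (N : ℕ) {Θ : ℝ × (Fin N → ℝ) → ℝ≥0∞} (hΘ : Measurable Θ) :
    ∫⁻ ω, Θ (ξ 0 ω, fun i : Fin N => ξ (i + 1) ω) ∂μ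
      = ∫⁻ x, ∫⁻ ω, Θ (x, fun i : Fin N => ξ (i : ℕ) ω) ∂μ ∂(μ.map (ξ 0)) := by
  set ν := μ.map (ξ 0) with hν
  have hνp : IsProbabilityMeasure ν := Measure.isProbabilityMeasure_map (hmeas 0).aemeasurable
  set e := MeasurableEquiv.piFinSuccAbove (fun _ : Fin (N + 1) => ℝ) 0 with he
  have hme : MeasurePreserving e (Measure.pi fun _ : Fin (N + 1) => ν)
      (ν.prod (Measure.pi fun _ : Fin N => ν)) :=
    measurePreserving_piFinSuccAbove (fun _ : Fin (N + 1) => ν) 0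
  have h2 : ∀ ω, (Θ ∘ ⇑e) (fun i : Fin (N + 1) => ξ (0 + i) ω)
      = Θ (ξ 0 ω, fun i : Fin N => ξ (i + 1) ω) := by
    intro ω
    simp only [Function.comp_apply, he, MeasurableEquiv.piFinSuccAbove,
      MeasurableEquiv.coe_mk, Fin.insertNthEquiv, Equiv.coe_fn_symm_mk]
    congr 1
    refine Prod.ext (by simp) ?_
    funext i
    simp [Fin.removeNth, Fin.succAbove_zero]
  calc ∫⁻ ω, Θ (ξ 0 ω, fun i : Fin N => ξ (i + 1) ω) ∂μ
      = ∫⁻ ω, (Θ ∘ ⇑e) (fun i : Fin (N + 1) => ξ (0 + i) ω) ∂μ := by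
        exact lintegral_congr fun ω => (h2 ω).symm
    _ = ∫⁻ y, (Θ ∘ ⇑e) y ∂(Measure.pi fun _ : Fin (N + 1) => ν) :=
        lintegral_vec μ ξ hmeas hindep hident 0 (N + 1) (hΘ.comp e.measurable)
    _ = ∫⁻ p, Θ p ∂(ν.prod (Measure.pi fun _ : Fin N => ν)) := hme.lintegral_comp hΘ
    _ = ∫⁻ x, ∫⁻ z, Θ (x, z) ∂(Measure.pi fun _ : Fin N => ν) ∂ν :=
        lintegral_prod Θ hΘ.aemeasurable
    _ = ∫⁻ x, ∫⁻ ω, Θ (x, fun i : Fin N => ξ (i : ℕ) ω) ∂μ ∂ν := by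
        refine lintegral_congr fun x => ?_
        have := lintegral_vec μ ξ hmeas hindep hident 0 N
          (Φ := fun z => Θ (x, z)) (hΘ.comp measurable_prodMk_left)
        simpa using this.symm

end Transfer

noncomputable section FFsec

/-- The recursive majorant. -/
def FF (ν : Measure ℝ) : ℕ → ℝ → ℝ≥0∞
  | 0, _ => 0
  | (N+1), t => ENNReal.ofReal (Real.exp (-t)) +
      ∫⁻ x, (if -t < x then FF ν N (t + x) else 0) ∂ν

lemma measurable_FF (ν : Measure ℝ) [SFinite ν] (N : ℕ) : Measurable (FF ν N) := by
  induction N with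
  | zero => simpa [FF] using measurable_const
  | succ N ih =>
    refine Measurable.add (f := fun t : ℝ => ENNReal.ofReal (Real.exp (-t))) (by fun_prop) ?_
    have hjoint : Measurable fun p : ℝ × ℝ => (if -p.1 < p.2 then FF ν N (p.1 + p.2) else 0) := by
      refine Measurable.ite ?_ (ih.comp (by fun_prop)) measurable_const
      exact measurableSet_lt measurable_fst.neg measurable_snd
    exact Measurable.lintegral_prod_right (f := fun t x => if -t < x then FF ν N (t + x) else 0)
      hjoint

end FFsec

section Claim1

variable {Ω : Type*} [MeasurableSpace Ω] (μ : Measure Ω) [IsProbabilityMeasure μ]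
  (ξ : ℕ → Ω → ℝ) (hmeas : ∀ i, Measurable (ξ i))
  (hindep : iIndepFun ξ μ)
  (hident : ∀ i, IdentDistrib (ξ i) (ξ 0) μ μ)

/-- Extension of a finite vector by zero. -/
def extVec (N : ℕ) (z : Fin N → ℝ) : ℕ → ℝ := fun i => if h : i < N then z ⟨i, h⟩ else 0

lemma measurable_extVec (N : ℕ) (i : ℕ) :
    Measurable fun z : Fin N → ℝ => extVec N z i := by
  unfold extVec
  split_ifs with h
  · exact measurable_pi_apply _
  · exact measurable_const

lemma extVec_agree {N : ℕ} (z : Fin N → ℝ) {i : ℕ} (h : i < N) :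
    extVec N z i = z ⟨i, h⟩ := dif_pos h

include hmeas hindep hident in
lemma claim1 : ∀ N : ℕ, ∀ t : ℝ,
    ∫⁻ ω, ∑ n ∈ Finset.range N, wFun n t (fun i => ξ i ω) ∂μ = FF (μ.map (ξ 0)) N t := by
  intro N
  induction N with
  | zero => simp [FF]
  | succ N ih =>
    intro t
    set ν := μ.map (ξ 0) with hν
    have hpt : ∀ ω, ∑ n ∈ Finset.range (N + 1), wFun n t (fun i => ξ i ω)
        = ENNReal.ofReal (Real.exp (-t)) +
          (if -t < ξ 0 ω then
            ∑ n ∈ Finset.range N, wFun n (t + ξ 0 ω) (fun i => ξ (i + 1) ω) else 0) :=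
      fun ω => sum_wFun_rec N t (fun i => ξ i ω)
    set Θ : ℝ × (Fin N → ℝ) → ℝ≥0∞ := fun p =>
      if -t < p.1 then
        ∑ n ∈ Finset.range N, wFun n (t + p.1) (extVec N p.2) else 0 with hΘdef
    have hΘ : Measurable Θ := by
      refine Measurable.ite (measurableSet_lt measurable_const measurable_fst) ?_
        measurable_const
      refine Finset.measurable_sum _ fun n _ => ?_
      exact measurable_wFun n (measurable_const.add measurable_fst)
        (fun i => (measurable_extVec N i).comp measurable_snd)
    have hsum_congr : ∀ (t' : ℝ) (y : ℕ → ℝ) (y' : ℕ → ℝ), (∀ i < N, y i = y' i) →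
        ∑ n ∈ Finset.range N, wFun n t' y = ∑ n ∈ Finset.range N, wFun n t' y' := by
      intro t' y y' hagree
      refine Finset.sum_congr rfl fun n hn => wFun_congr fun i hi => hagree i ?_
      exact lt_of_lt_of_le hi (Nat.le_of_lt_succ (Nat.lt_succ_of_lt (Finset.mem_range.mp hn)))
    have hΘleft : ∀ ω, Θ (ξ 0 ω, fun i : Fin N => ξ ((i : ℕ) + 1) ω)
        = (if -t < ξ 0 ω then
            ∑ n ∈ Finset.range N, wFun n (t + ξ 0 ω) (fun i => ξ (i + 1) ω) else 0) := by
      intro ω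
      simp only [hΘdef]
      split_ifs with h
      · exact hsum_congr _ _ _ fun i hi => extVec_agree _ hi
      · rfl
    have hΘright : ∀ (x : ℝ) (ω : Ω), Θ (x, fun i : Fin N => ξ (i : ℕ) ω)
        = (if -t < x then ∑ n ∈ Finset.range N, wFun n (t + x) (fun i => ξ i ω) else 0) := by
      intro x ω
      simp only [hΘdef]
      split_ifs with h
      · exact hsum_congr _ _ _ fun i hi => extVec_agree _ hi
      · rfl
    calc ∫⁻ ω, ∑ n ∈ Finset.range (N + 1), wFun n t (fun i => ξ i ω) ∂μ
        = ∫⁻ ω, (ENNReal.ofReal (Real.exp (-t)) +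
            Θ (ξ 0 ω, fun i : Fin N => ξ ((i : ℕ) + 1) ω)) ∂μ := by
          refine lintegral_congr fun ω => ?_
          rw [hpt ω, hΘleft ω]
      _ = ENNReal.ofReal (Real.exp (-t)) +
            ∫⁻ ω, Θ (ξ 0 ω, fun i : Fin N => ξ ((i : ℕ) + 1) ω) ∂μ := by
          rw [lintegral_add_left measurable_const, lintegral_const, measure_univ, mul_one]
      _ = ENNReal.ofReal (Real.exp (-t)) +
            ∫⁻ x, ∫⁻ ω, Θ (x, fun i : Fin N => ξ (i : ℕ) ω) ∂μ ∂ν := by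
          rw [step_lemma μ ξ hmeas hindep hident N hΘ]
      _ = ENNReal.ofReal (Real.exp (-t)) +
            ∫⁻ x, (if -t < x then FF ν N (t + x) else 0) ∂ν := by
          congr 1
          refine lintegral_congr fun x => ?_
          rw [lintegral_congr fun ω => hΘright x ω]
          split_ifs with h
          · exact ih (t + x)
          · exact lintegral_zero
      _ = FF ν (N + 1) t := rfl

end Claim1

section Super

variable {ν : Measure ℝ} [IsProbabilityMeasure ν]

lemma integrableOn_exp_neg (t : ℝ) :
    IntegrableOn (fun x : ℝ => Real.exp (-x)) {x | -t < x} ν := by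
  refine Measure.integrableOn_of_bounded (M := Real.exp t) (measure_ne_top _ _)
    (Real.continuous_exp.comp continuous_neg).aestronglyMeasurable ?_
  refine (ae_restrict_iff' (measurableSet_Ioi (a := -t))).mpr (ae_of_all _ fun x hx => ?_)
  rw [Real.norm_eq_abs, abs_of_pos (Real.exp_pos _), Real.exp_le_exp]
  have : -t < x := hx
  linarith

set_option maxHeartbeats 1000000 in
lemma exists_supersolution (hi : Integrable (fun x : ℝ => x) ν)
    (hdrift : ∫ x, x ∂ν < 0) :
    ∃ A K : ℝ, 0 ≤ A ∧ 0 ≤ K ∧ ∀ t : ℝ, 0 < t →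
      Real.exp (-t) +
        ∫ x, Set.indicator {x | -t < x} (fun x => A + K - K * Real.exp (-(t + x))) x ∂ν
      ≤ A + K - K * Real.exp (-t) := by
  classical
  obtain ⟨m, hm_def⟩ : ∃ y : ℝ, y = -∫ x, x ∂ν := ⟨_, rfl⟩
  have hm : 0 < m := by rw [hm_def]; linarith
  have habs : Integrable (fun x : ℝ => |x|) ν := hi.abs
  obtain ⟨C3, hC3_def⟩ : ∃ y : ℝ, y = ∫ x, |x| ∂ν := ⟨_, rfl⟩
  have hC3 : 0 ≤ C3 := hC3_def ▸ integral_nonneg fun x => abs_nonneg x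
  -- choose M with small deep-tail contribution
  have htail_tendsto : Filter.Tendsto
      (fun n : ℕ => ∫ x, Set.indicator (Set.Iic (-(n : ℝ))) (fun x => -x) x ∂ν)
      Filter.atTop (nhds 0) := by
    have h := MeasureTheory.tendsto_integral_of_dominated_convergence
      (F := fun n : ℕ => fun x : ℝ => Set.indicator (Set.Iic (-(n : ℝ))) (fun x => -x) x)
      (f := fun _ : ℝ => (0 : ℝ)) (bound := fun x : ℝ => |x|)
      (fun n => (measurable_neg.indicator measurableSet_Iic).aestronglyMeasurable)
      habs
      (fun n => ae_of_all _ fun x => ?_)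
      (ae_of_all _ fun x => ?_)
    · simpa using h
    · show ‖(Set.Iic (-(n : ℝ))).indicator (fun x => -x) x‖ ≤ |x|
      by_cases hx : x ∈ Set.Iic (-(n : ℝ))
      · rw [Set.indicator_of_mem hx]; simp
      · rw [Set.indicator_of_notMem hx]; simp
    · refine Filter.Tendsto.congr' ?_ tendsto_const_nhds
      have hev : ∀ᶠ n : ℕ in Filter.atTop, x ∉ Set.Iic (-(n : ℝ)) := by
        refine Filter.eventually_atTop.mpr ⟨⌈-x⌉₊ + 1, fun n hn => ?_⟩
        simp only [Set.mem_Iic, not_le]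
        have h1 : (-x : ℝ) ≤ ⌈-x⌉₊ := Nat.le_ceil _
        have h2 : ((⌈-x⌉₊ + 1 : ℕ) : ℝ) ≤ n := by exact_mod_cast hn
        push_cast at h2
        linarith
      exact hev.mono fun n hn => (Set.indicator_of_notMem hn _).symm
  obtain ⟨n, hn⟩ := ((htail_tendsto.eventually_lt_const (by positivity : (0:ℝ) < m / 4)).and
    (Filter.eventually_ge_atTop 1)).exists
  obtain ⟨M, hM_def⟩ : ∃ y : ℝ, y = (n : ℝ) := ⟨_, rfl⟩
  have hM1 : (1 : ℝ) ≤ M := by rw [hM_def]; exact_mod_cast hn.2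
  have hM0 : (0 : ℝ) < M := by linarith
  have htailM : ∫ x in Set.Iic (-M), -x ∂ν < m / 4 := by
    have h := hn.1
    rw [integral_indicator measurableSet_Iic] at h
    rwa [hM_def]
  obtain ⟨p0, hp0_def⟩ : ∃ y : ℝ, y = m / (4 * M) := ⟨_, rfl⟩
  have hp0 : 0 < p0 := by rw [hp0_def]; positivity
  obtain ⟨K, hK_def⟩ : ∃ y : ℝ, y = 2 / m := ⟨_, rfl⟩
  have hK : 0 ≤ K := by rw [hK_def]; positivity
  obtain ⟨A, hA_def⟩ : ∃ y : ℝ, y = (1 + K * C3) / p0 := ⟨_, rfl⟩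
  have hA : 0 ≤ A := by
    rw [hA_def]
    have h1 : 0 ≤ 1 + K * C3 := by have := mul_nonneg hK hC3; linarith
    positivity
  have hAp0 : A * p0 = 1 + K * C3 := by
    rw [hA_def, div_mul_cancel₀ _ hp0.ne']
  refine ⟨A, K, hA, hK, fun t ht => ?_⟩
  have hS : MeasurableSet {x : ℝ | -t < x} := measurableSet_Ioi
  have hSc : MeasurableSet (Set.Iic (-t)) := measurableSet_Iic
  have hScompl : {x : ℝ | -t < x}ᶜ = Set.Iic (-t) := by
    ext x; simp [Set.mem_Iic, not_lt]
  obtain ⟨P, hP_def⟩ : ∃ y : ℝ, y = (ν {x : ℝ | -t < x}).toReal := ⟨_, rfl⟩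
  obtain ⟨Q, hQ_def⟩ : ∃ y : ℝ, y = (ν (Set.Iic (-t))).toReal := ⟨_, rfl⟩
  have hP0 : 0 ≤ P := hP_def ▸ ENNReal.toReal_nonneg
  have hQ0 : 0 ≤ Q := hQ_def ▸ ENNReal.toReal_nonneg
  have hPQ : P + Q = 1 := by
    have h := prob_add_prob_compl (μ := ν) hS
    rw [hScompl] at h
    have h2 := congrArg ENNReal.toReal h
    rw [ENNReal.toReal_add (measure_ne_top _ _) (measure_ne_top _ _), ENNReal.toReal_one] at h2
    rw [hP_def, hQ_def]
    exact h2
  obtain ⟨E1, hE1_def⟩ : ∃ y : ℝ, y = ∫ x in {x : ℝ | -t < x}, Real.exp (-x) ∂ν := ⟨_, rfl⟩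
  obtain ⟨IS, hIS_def⟩ : ∃ y : ℝ, y = ∫ x in {x : ℝ | -t < x}, x ∂ν := ⟨_, rfl⟩
  obtain ⟨tail, htail_def⟩ : ∃ y : ℝ, y = ∫ x in Set.Iic (-t), -x ∂ν := ⟨_, rfl⟩
  have htail0 : 0 ≤ tail := htail_def ▸ setIntegral_nonneg hSc fun x hx => by
    simp only [Set.mem_Iic] at hx; linarith
  have htailC3 : tail ≤ C3 := by
    have h1 : tail ≤ ∫ x in Set.Iic (-t), |x| ∂ν := htail_def ▸
      setIntegral_mono_on hi.neg.integrableOn habs.integrableOn hSc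
        fun x _ => neg_le_abs x
    have h2 : ∫ x in Set.Iic (-t), |x| ∂ν ≤ C3 := hC3_def ▸
      setIntegral_le_integral habs (ae_of_all _ fun x => abs_nonneg x)
    linarith
  have hIS : IS = -m + tail := by
    have h := integral_add_compl hS hi
    rw [hScompl] at h
    have h2 : ∫ x in Set.Iic (-t), x ∂ν = -tail := by
      rw [htail_def, integral_neg]; ring
    rw [h2, ← hIS_def] at h
    rw [hm_def] at hm ⊢
    linarith
  have hE1b : P + (m - tail) ≤ E1 := by
    have hint1 : IntegrableOn (fun x : ℝ => 1 - x) {x : ℝ | -t < x} ν :=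
      (integrableOn_const (C := (1:ℝ)) (measure_ne_top ν _)).sub
        hi.integrableOn
    have hmono : ∫ x in {x : ℝ | -t < x}, (1 - x) ∂ν ≤ E1 := by
      rw [hE1_def]
      refine setIntegral_mono_on hint1 (integrableOn_exp_neg t) hS fun x _ => ?_
      nlinarith [Real.add_one_le_exp (-x)]
    have hsplit : ∫ x in {x : ℝ | -t < x}, (1 - x) ∂ν = P - IS := by
      rw [integral_sub (integrableOn_const (C := (1:ℝ)) (measure_ne_top ν _))
        hi.integrableOn, setIntegral_const, smul_eq_mul, mul_one, measureReal_def, ← hP_def, ← hIS_def]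
    rw [hsplit, hIS] at hmono
    linarith
  have hepos : 0 < Real.exp (-t) := Real.exp_pos _
  have he1 : Real.exp (-t) ≤ 1 := by
    rw [← Real.exp_zero]; exact Real.exp_le_exp.mpr (by linarith)
  -- compute the indicator integral
  have hI1 : ∫ x, Set.indicator {x | -t < x} (fun x => A + K - K * Real.exp (-(t + x))) x ∂ν
      = (A + K) * P - K * Real.exp (-t) * E1 := by
    rw [integral_indicator hS]
    have hcongr : ∀ x ∈ {x : ℝ | -t < x}, A + K - K * Real.exp (-(t + x))
        = (A + K) - (K * Real.exp (-t)) * Real.exp (-x) := by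
      intro x _
      rw [neg_add, Real.exp_add]; ring
    rw [setIntegral_congr_fun hS hcongr,
      integral_sub (integrableOn_const (C := A + K) (measure_ne_top ν _))
        ((integrableOn_exp_neg t).const_mul _),
      setIntegral_const, smul_eq_mul, integral_const_mul, measureReal_def, ← hP_def, ← hE1_def]
    ring
  rw [hI1]
  obtain ⟨e, he_def⟩ : ∃ y : ℝ, y = Real.exp (-t) := ⟨_, rfl⟩
  rw [← he_def]
  rw [← he_def] at hepos he1
  have hprod1 : (A + K) * P = (A + K) - (A + K) * Q := by
    have hP' : P = 1 - Q := by linarith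
    rw [hP']; ring
  have hE1' : K * e * P + K * e * (m - tail) ≤ K * e * E1 := by
    have h := mul_le_mul_of_nonneg_left hE1b (mul_nonneg hK hepos.le)
    calc K * e * P + K * e * (m - tail) = K * e * (P + (m - tail)) := by ring
      _ ≤ K * e * E1 := h
  have hprod2 : K * e * P = K * e - K * e * Q := by
    have hP' : P = 1 - Q := by linarith
    rw [hP']; ring
  have hkey : e + K * e * Q ≤ (A + K) * Q + K * e * (m - tail) := by
    by_cases hcase : tail ≤ m / 2
    · have hKm : 1 ≤ K * (m - tail) := by
        have h1 : K * (m / 2) = 1 := by rw [hK_def]; field_simp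
        nlinarith
      have h1 : e * 1 ≤ e * (K * (m - tail)) := mul_le_mul_of_nonneg_left hKm hepos.le
      have h2 : (K * Q) * e ≤ (K * Q) * 1 := mul_le_mul_of_nonneg_left he1
        (mul_nonneg hK hQ0)
      have h3 : 0 ≤ A * Q := mul_nonneg hA hQ0
      linarith only [h1, h2, h3]
    · -- deep tail big: Q is bounded below
      push_neg at hcase
      have hQp : p0 ≤ Q := by
        have hsplit : Set.Iic (-t) =
            (Set.Iic (-t) ∩ Set.Ioi (-M)) ∪ (Set.Iic (-t) ∩ Set.Iic (-M)) := by
          rw [← Set.inter_union_distrib_left, Set.union_comm, Set.Iic_union_Ioi, Set.inter_univ]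
        have hdisj : Disjoint (Set.Iic (-t) ∩ Set.Ioi (-M)) (Set.Iic (-t) ∩ Set.Iic (-M)) :=
          Disjoint.mono Set.inter_subset_right Set.inter_subset_right
            (Set.Iic_disjoint_Ioi le_rfl).symm
        have htail_split : tail = (∫ x in Set.Iic (-t) ∩ Set.Ioi (-M), -x ∂ν)
            + ∫ x in Set.Iic (-t) ∩ Set.Iic (-M), -x ∂ν := by
          rw [htail_def]
          conv_lhs => rw [hsplit]
          exact setIntegral_union hdisj (hSc.inter measurableSet_Iic)
            hi.neg.integrableOn hi.neg.integrableOn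
        have hbound1 : ∫ x in Set.Iic (-t) ∩ Set.Ioi (-M), -x ∂ν ≤ M * Q := by
          have h1 : ∫ x in Set.Iic (-t) ∩ Set.Ioi (-M), -x ∂ν
              ≤ ∫ _ in Set.Iic (-t) ∩ Set.Ioi (-M), M ∂ν := by
            refine setIntegral_mono_on hi.neg.integrableOn
              (integrableOn_const (C := M) (measure_ne_top ν _))
              (hSc.inter measurableSet_Ioi) fun x hx => ?_
            have : -M < x := hx.2
            linarith
          rw [setIntegral_const, smul_eq_mul, measureReal_def] at h1
          have h2 : (ν (Set.Iic (-t) ∩ Set.Ioi (-M))).toReal ≤ Q := hQ_def ▸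
            ENNReal.toReal_mono (measure_ne_top _ _) (measure_mono Set.inter_subset_left)
          have h3 := mul_le_mul_of_nonneg_right h2 hM0.le
          linarith only [h1, h3]
        have hbound2 : ∫ x in Set.Iic (-t) ∩ Set.Iic (-M), -x ∂ν
            ≤ ∫ x in Set.Iic (-M), -x ∂ν := by
          refine setIntegral_mono_set hi.neg.integrableOn ?_
            (HasSubset.Subset.eventuallyLE Set.inter_subset_right)
          refine (ae_restrict_iff' measurableSet_Iic).mpr (ae_of_all _ fun x hx => ?_)
          simp only [Set.mem_Iic] at hx
          show (0:ℝ) ≤ -x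
          linarith
        have hfin : m / 2 < M * Q + m / 4 := by linarith [htailM]
        rw [hp0_def, div_le_iff₀ (by positivity)]
        linarith only [hfin]
      have hAQ : 1 + K * C3 ≤ A * Q := by
        calc 1 + K * C3 = A * p0 := hAp0.symm
          _ ≤ A * Q := mul_le_mul_of_nonneg_left hQp hA
      have h2 : (K * Q) * e ≤ (K * Q) * 1 := mul_le_mul_of_nonneg_left he1
        (mul_nonneg hK hQ0)
      have h4 : 0 ≤ (K * e) * (C3 + (m - tail)) := mul_nonneg (mul_nonneg hK hepos.le)
        (by linarith)
      have h5 : (K * C3) * e ≤ (K * C3) * 1 := mul_le_mul_of_nonneg_left he1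
        (mul_nonneg hK hC3)
      linarith only [hAQ, h2, h4, h5, he1]
  linarith only [hkey, hE1', hprod1, hprod2]

end Super


/-- The first time `ν(t) = inf {n ≥ 1 : Sₙ ≤ -t}` the walk `Sₙ = ξ₁ + ⋯ + ξₙ` drops
below `-t` (with value `⊤` if this never happens). Here `ξ (i-1)` plays the role
of `ξ_i`, so `S n ω = ∑ i ∈ Finset.range n, ξ i ω`. -/
noncomputable def firstDescentTime {Ω : Type*} (ξ : ℕ → Ω → ℝ) (t : ℝ) (ω : Ω) : ℕ∞ :=
  sInf {n : ℕ∞ | ∃ m : ℕ, n = m ∧ 1 ≤ m ∧ (∑ i ∈ Finset.range m, ξ i ω) ≤ -t}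

section Final

lemma lt_firstDescentTime_iff {Ω : Type*} (ξ : ℕ → Ω → ℝ) (t : ℝ) (ω : Ω) (n : ℕ) :
    ((n : ℕ∞) < firstDescentTime ξ t ω) ↔
      ∀ m, 1 ≤ m → m ≤ n → -t < ∑ i ∈ Finset.range m, ξ i ω := by
  unfold firstDescentTime
  constructor
  · intro h m h1 h2
    by_contra hle
    push_neg at hle
    have hmem : (m : ℕ∞) ∈ {e : ℕ∞ | ∃ m' : ℕ, e = m' ∧ 1 ≤ m' ∧
        (∑ i ∈ Finset.range m', ξ i ω) ≤ -t} := ⟨m, rfl, h1, hle⟩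
    have := lt_of_lt_of_le h (sInf_le hmem)
    exact absurd (by exact_mod_cast this) (by omega)
  · intro h
    refine lt_of_lt_of_le (b := ((n + 1 : ℕ) : ℕ∞)) ?_ (le_sInf ?_)
    · exact_mod_cast (Nat.cast_lt (α := ℕ∞)).mpr (Nat.lt_succ_self n)
    · rintro b ⟨m, rfl, h1, hSm⟩
      refine (Nat.cast_le (α := ℕ∞)).mpr ?_
      by_contra hc
      push_neg at hc
      exact absurd (h m h1 (by omega)) (not_lt.mpr hSm)

theorem expected_exp_sum_before_descent'
    {Ω : Type*} [MeasurableSpace Ω] (μ : Measure Ω) [IsProbabilityMeasure μ]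
    (ξ : ℕ → Ω → ℝ) (hmeas : ∀ i, Measurable (ξ i))
    (hindep : iIndepFun ξ μ)
    (hident : ∀ i, IdentDistrib (ξ i) (ξ 0) μ μ)
    (hint : Integrable (ξ 0) μ) (hdrift : ∫ ω, ξ 0 ω ∂μ < 0) :
    ∃ C : ℝ≥0∞, C < ⊤ ∧ ∀ t : ℝ, 0 < t →
      (∫⁻ ω, ∑' n : ℕ,
          (if (n : ℕ∞) < firstDescentTime ξ t ω then
            ENNReal.ofReal (Real.exp (-(∑ i ∈ Finset.range n, ξ i ω))) else 0) ∂μ)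
        ≤ C * ENNReal.ofReal (Real.exp t) := by
  set ν := μ.map (ξ 0) with hν
  have hνp : IsProbabilityMeasure ν := Measure.isProbabilityMeasure_map (hmeas 0).aemeasurable
  have hi : Integrable (fun x : ℝ => x) ν := by
    rw [hν, integrable_map_measure (f := ξ 0) (g := fun x : ℝ => x)
      measurable_id.aestronglyMeasurable (hmeas 0).aemeasurable]
    exact hint
  have hd : ∫ x, x ∂ν < 0 := by
    rw [hν, integral_map (φ := ξ 0) (f := fun x : ℝ => x) (hmeas 0).aemeasurable
      measurable_id.aestronglyMeasurable]
    exact hdrift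
  obtain ⟨A, K, hA, hK, hsuper⟩ := exists_supersolution hi hd
  -- FF is bounded by the supersolution
  have hFF : ∀ N : ℕ, ∀ t : ℝ, 0 < t →
      FF ν N t ≤ ENNReal.ofReal (A + K - K * Real.exp (-t)) := by
    intro N
    induction N with
    | zero => intro t _; exact zero_le
    | succ N ih =>
      intro t ht
      have hgb_nonneg : ∀ s : ℝ, 0 < s → 0 ≤ A + K - K * Real.exp (-s) := by
        intro s hs
        have h1 : Real.exp (-s) ≤ 1 := by
          rw [← Real.exp_zero]; exact Real.exp_le_exp.mpr (by linarith)
        nlinarith [Real.exp_pos (-s)]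
      have hmono : FF ν (N + 1) t ≤ ENNReal.ofReal (Real.exp (-t)) +
          ∫⁻ x, (if -t < x then
            ENNReal.ofReal (A + K - K * Real.exp (-(t + x))) else 0) ∂ν := by
        refine add_le_add_right (lintegral_mono fun x => ?_) _
        split_ifs with h
        · exact ih (t + x) (by linarith)
        · exact le_rfl
      have hind : ∀ x : ℝ, (if -t < x then
            ENNReal.ofReal (A + K - K * Real.exp (-(t + x))) else 0)
          = ENNReal.ofReal (Set.indicator {x : ℝ | -t < x}
              (fun x => A + K - K * Real.exp (-(t + x))) x) := by
        intro x
        by_cases h : -t < x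
        · have hx' : x ∈ {x : ℝ | -t < x} := h
          rw [if_pos h, Set.indicator_of_mem hx']
        · have hx' : x ∉ {x : ℝ | -t < x} := h
          rw [if_neg h, Set.indicator_of_notMem hx', ENNReal.ofReal_zero]
      have hIntOn : IntegrableOn (fun x : ℝ => A + K - K * Real.exp (-(t + x)))
          {x : ℝ | -t < x} ν := by
        have heq : (fun x : ℝ => A + K - K * Real.exp (-(t + x)))
            = fun x : ℝ => (A + K) - (K * Real.exp (-t)) * Real.exp (-x) := by
          funext x; rw [neg_add, Real.exp_add]; ring
        rw [heq]
        exact (integrableOn_const (C := A + K) (measure_ne_top ν _)).sub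
          ((integrableOn_exp_neg t).const_mul _)
      have hInt : Integrable (Set.indicator {x : ℝ | -t < x}
          (fun x => A + K - K * Real.exp (-(t + x)))) ν :=
        hIntOn.integrable_indicator measurableSet_Ioi
      have hnn : 0 ≤ᵐ[ν] Set.indicator {x : ℝ | -t < x}
          (fun x => A + K - K * Real.exp (-(t + x))) := by
        refine ae_of_all _ fun x => Set.indicator_apply_nonneg fun hx => ?_
        have : -t < x := hx
        exact hgb_nonneg (t + x) (by linarith)
      have hlin : ∫⁻ x, (if -t < x then
            ENNReal.ofReal (A + K - K * Real.exp (-(t + x))) else 0) ∂ν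
          = ENNReal.ofReal (∫ x, Set.indicator {x : ℝ | -t < x}
              (fun x => A + K - K * Real.exp (-(t + x))) x ∂ν) := by
        rw [lintegral_congr hind, ← ofReal_integral_eq_lintegral_ofReal hInt hnn]
      have hI0 : 0 ≤ ∫ x, Set.indicator {x : ℝ | -t < x}
          (fun x => A + K - K * Real.exp (-(t + x))) x ∂ν := integral_nonneg_of_ae hnn
      calc FF ν (N + 1) t ≤ ENNReal.ofReal (Real.exp (-t)) +
            ∫⁻ x, (if -t < x then
              ENNReal.ofReal (A + K - K * Real.exp (-(t + x))) else 0) ∂ν := hmono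
        _ = ENNReal.ofReal (Real.exp (-t) + ∫ x, Set.indicator {x : ℝ | -t < x}
              (fun x => A + K - K * Real.exp (-(t + x))) x ∂ν) := by
            rw [hlin, ← ENNReal.ofReal_add (Real.exp_pos _).le hI0]
        _ ≤ ENNReal.ofReal (A + K - K * Real.exp (-t)) :=
            ENNReal.ofReal_le_ofReal (hsuper t ht)
  refine ⟨ENNReal.ofReal (A + K), ENNReal.ofReal_lt_top, fun t ht => ?_⟩
  -- rewrite the summand
  have hsummand : ∀ (ω : Ω) (n : ℕ),
      (if (n : ℕ∞) < firstDescentTime ξ t ω then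
        ENNReal.ofReal (Real.exp (-(∑ i ∈ Finset.range n, ξ i ω))) else 0)
      = wFun n t (fun i => ξ i ω) * ENNReal.ofReal (Real.exp t) := by
    intro ω n
    rw [wFun]
    by_cases h : ∀ m, 1 ≤ m → m ≤ n → -t < ∑ i ∈ Finset.range m, ξ i ω
    · rw [if_pos ((lt_firstDescentTime_iff ξ t ω n).mpr h), if_pos h,
        ← ENNReal.ofReal_mul (Real.exp_pos _).le, ← Real.exp_add]
      congr 2
      ring
    · rw [if_neg (fun hlt => h ((lt_firstDescentTime_iff ξ t ω n).mp hlt)), if_neg h,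
        zero_mul]
  have hmw : ∀ n : ℕ, Measurable fun ω => wFun n t (fun i => ξ i ω) :=
    fun n => measurable_wFun n measurable_const fun i => hmeas i
  calc ∫⁻ ω, ∑' n : ℕ,
        (if (n : ℕ∞) < firstDescentTime ξ t ω then
          ENNReal.ofReal (Real.exp (-(∑ i ∈ Finset.range n, ξ i ω))) else 0) ∂μ
      = ∫⁻ ω, (∑' n : ℕ, wFun n t (fun i => ξ i ω)) * ENNReal.ofReal (Real.exp t) ∂μ := by
        refine lintegral_congr fun ω => ?_
        rw [← ENNReal.tsum_mul_right]
        exact tsum_congr fun n => hsummand ω n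
    _ = (∫⁻ ω, ∑' n : ℕ, wFun n t (fun i => ξ i ω) ∂μ) * ENNReal.ofReal (Real.exp t) :=
        lintegral_mul_const _ (Measurable.ennreal_tsum hmw)
    _ ≤ ENNReal.ofReal (A + K) * ENNReal.ofReal (Real.exp t) := by
        refine mul_le_mul_left ?_ _
        rw [lintegral_tsum fun n => (hmw n).aemeasurable, ENNReal.tsum_eq_iSup_nat]
        refine iSup_le fun N => ?_
        rw [← lintegral_finset_sum _ fun n _ => hmw n,
          claim1 μ ξ hmeas hindep hident N t]
        refine le_trans (hFF N t ht) (ENNReal.ofReal_le_ofReal ?_)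
        nlinarith [Real.exp_pos (-t), hK]

end Final

/-- **Exponential bound before descent.** Let `ξ₁, ξ₂, …` be i.i.d. with
`E[ξ₁] ∈ (-∞, 0)` and `E[e^{u ξ₁}] < ∞` for some `u > 0`. Then there is a constant
`C < ∞` such that `E[∑_{n=0}^{ν(t)-1} e^{-Sₙ}] ≤ C e^t` for all `t > 0`. -/
theorem expected_exp_sum_before_descent
    {Ω : Type*} [MeasurableSpace Ω] (μ : Measure Ω) [IsProbabilityMeasure μ]
    (ξ : ℕ → Ω → ℝ) (hmeas : ∀ i, Measurable (ξ i))
    (hindep : iIndepFun ξ μ)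
    (hident : ∀ i, IdentDistrib (ξ i) (ξ 0) μ μ)
    (hint : Integrable (ξ 0) μ) (hdrift : ∫ ω, ξ 0 ω ∂μ < 0)
    (u : ℝ) (hu : 0 < u)
    (hexp : ∫⁻ ω, ENNReal.ofReal (Real.exp (u * ξ 0 ω)) ∂μ < ⊤) :
    ∃ C : ℝ≥0∞, C < ⊤ ∧ ∀ t : ℝ, 0 < t →
      (∫⁻ ω, ∑' n : ℕ,
          (if (n : ℕ∞) < firstDescentTime ξ t ω then
            ENNReal.ofReal (Real.exp (-(∑ i ∈ Finset.range n, ξ i ω))) else 0) ∂μ)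
        ≤ C * ENNReal.ofReal (Real.exp t) := by
  obtain ⟨C, hC, hbound⟩ := expected_exp_sum_before_descent' μ ξ hmeas hindep hident hint hdrift
  exact ⟨C, hC, hbound⟩
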